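/- If M is a linear lambda term with free variables x_1,...,x_n, then the principal type alpha_1 → ... → alpha_n → beta of lambda x_1 ... lambda x_n. M is balanced, i.e., every atomic type occurring in it occurs exactly twice. -/

import Mathlib

inductive Tm : Type
  | var : ℕ → Tm
  | app : Tm → Tm → Tm
  | lam : ℕ → Tm → Tm
  deriving DecidableEq

namespace Tm

/-- number of free occurrences of variable `x` in a term -/
def countFree (x : ℕ) : Tm → ℕ
  | var y => if y = x then 1 else 0
  | app M N => countFree x M + countFree x N
  | lam y N => if y = x then 0 else countFree x N

/-- every abstraction in the term binds exactly one occurrence of its variable -/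
def LinearBody : Tm → Prop
  | var _ => True
  | app M N => LinearBody M ∧ LinearBody N
  | lam y N => LinearBody N ∧ countFree y N = 1

/-- A linear lambda term: every abstraction binds exactly one occurrence,
and every free variable occurs exactly once. -/
def Linear (M : Tm) : Prop := LinearBody M ∧ ∀ x, countFree x M ≤ 1

/-- `y` occurs as a binder somewhere in the term -/
def Binds (y : ℕ) : Tm → Prop
  | var _ => False
  | app M N => Binds y M ∨ Binds y N
  | lam z M => z = y ∨ Binds y M

def subst (x : ℕ) (N : Tm) : Tm → Tm
  | var y => if y = x then N else var y
  | app P Q => app (subst x N P) (subst x N Q)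
  | lam y P => if y = x then lam y P else lam y (subst x N P)

/-- one-step beta-eta reduction -/
inductive Step : Tm → Tm → Prop
  | beta (x : ℕ) (M N : Tm) : (∀ y, countFree y N ≠ 0 → ¬ Binds y M) →
      Step (app (lam x M) N) (subst x N M)
  | eta (x : ℕ) (M : Tm) : countFree x M = 0 → Step (lam x (app M (var x))) M
  | appL {M M' : Tm} (N : Tm) : Step M M' → Step (app M N) (app M' N)
  | appR (M : Tm) {N N' : Tm} : Step N N' → Step (app M N) (app M N')
  | xi (y : ℕ) {M M' : Tm} : Step M M' → Step (lam y M) (lam y M')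

/-- many-step beta-eta reduction -/
def Reduces : Tm → Tm → Prop := Relation.ReflTransGen Step

/-- beta-eta convertibility -/
def BetaEtaEq : Tm → Tm → Prop := Relation.EqvGen Step

end Tm
inductive Ty : Type
  | atom : ℕ → Ty
  | arrow : Ty → Ty → Ty
  deriving DecidableEq

namespace Ty
/-- apply a type substitution -/
def substT (s : ℕ → Ty) : Ty → Ty
  | atom n => s n
  | arrow a b => arrow (substT s a) (substT s b)
end Ty

/-- Curry-style simple typing, contexts as association lists with lookup -/
def lookupCtx : List (ℕ × Ty) → ℕ → Option Ty
  | [], _ => none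
  | (y, α) :: Γ, x => if x = y then some α else lookupCtx Γ x

inductive STyping : List (ℕ × Ty) → Tm → Ty → Prop
  | var {Γ x α} : lookupCtx Γ x = some α → STyping Γ (Tm.var x) α
  | app {Γ M N α β} : STyping Γ M (Ty.arrow α β) → STyping Γ N α →
      STyping Γ (Tm.app M N) β
  | lam {Γ x α M β} : STyping ((x, α) :: Γ) M β →
      STyping Γ (Tm.lam x M) (Ty.arrow α β)

/-- `α` is a principal type of `M` -/
def PrincipalType (M : Tm) (α : Ty) : Prop :=
  (∃ Γ, STyping Γ M α) ∧ ∀ Γ β, STyping Γ M β → ∃ s, Ty.substT s α = β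

def countAtom (n : ℕ) : Ty → ℕ
  | .atom m => if m = n then 1 else 0
  | .arrow a b => countAtom n a + countAtom n b

/-- every atomic type occurring in the type occurs exactly twice -/
def BalancedTy (α : Ty) : Prop := ∀ n, countAtom n α ≠ 0 → countAtom n α = 2

open Ty

theorem substT_comp (t s : ℕ → Ty) (τ : Ty) :
    substT t (substT s τ) = substT (fun n => substT t (s n)) τ := by
  induction τ with
  | atom n => rfl
  | arrow a b iha ihb => simp [substT, iha, ihb]

theorem substT_id (τ : Ty) : substT (fun n => atom n) τ = τ := by
  induction τ with
  | atom n => rfl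
  | arrow a b iha ihb => simp [substT, iha, ihb]

theorem substT_congr' {s t : ℕ → Ty} {τ : Ty}
    (h : ∀ n, countAtom n τ ≠ 0 → s n = t n) : substT s τ = substT t τ := by
  induction τ with
  | atom n => exact h n (by simp [countAtom])
  | arrow a b iha ihb =>
    simp only [substT]
    rw [iha (fun n hn => h n (by simp [countAtom]; omega)),
        ihb (fun n hn => h n (by simp [countAtom]; omega))]

theorem exists_atom (τ : Ty) : ∃ m, countAtom m τ ≠ 0 := by
  induction τ with
  | atom n => exact ⟨n, by simp [countAtom]⟩
  | arrow a b iha ihb =>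
    obtain ⟨m, hm⟩ := iha
    exact ⟨m, by simp [countAtom]; omega⟩

theorem fix_atoms {u : ℕ → Ty} {τ : Ty} (h : substT u τ = τ) :
    ∀ k, countAtom k τ ≠ 0 → u k = .atom k := by
  induction τ with
  | atom n =>
    intro k hk
    have : n = k := by by_contra hnk; simp [countAtom, hnk] at hk
    subst this
    exact h
  | arrow a b iha ihb =>
    intro k hk
    simp only [substT, Ty.arrow.injEq] at h
    have hk' : countAtom k a ≠ 0 ∨ countAtom k b ≠ 0 := by
      simp only [countAtom] at hk; omega
    rcases hk' with h1 | h1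
    · exact iha h.1 k h1
    · exact ihb h.2 k h1

theorem count_le_subst {t : ℕ → Ty} {n m : ℕ} (h : t n = .atom m) (τ : Ty) :
    countAtom n τ ≤ countAtom m (substT t τ) := by
  induction τ with
  | atom k =>
    by_cases hk : k = n
    · subst hk; simp [substT, h, countAtom]
    · simp [countAtom, hk]
  | arrow a b iha ihb =>
    simp [countAtom, substT]; omega

theorem count_ge_subst {t : ℕ → Ty} {n m : ℕ} (h : t n = .atom m) (τ : Ty)
    (H : ∀ k, countAtom k τ ≠ 0 → k = n ∨ countAtom m (t k) = 0) :
    countAtom m (substT t τ) ≤ countAtom n τ := by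
  induction τ with
  | atom k =>
    by_cases hk : k = n
    · subst hk; simp [substT, h, countAtom]
    · have := H k (by simp [countAtom])
      rcases this with h1 | h1
      · exact absurd h1 hk
      · simp [substT, countAtom, hk, h1]
  | arrow a b iha ihb =>
    simp only [substT, countAtom]
    have ha := iha (fun k hk => H k (by simp [countAtom]; omega))
    have hb := ihb (fun k hk => H k (by simp [countAtom]; omega))
    omega

theorem balanced_transfer {α β : Ty} {s t : ℕ → Ty}
    (hst : substT s β = α) (hts : substT t α = β) (hb : BalancedTy β) :
    BalancedTy α := by
  have hfix : substT (fun n => substT s (t n)) α = α := by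
    rw [← substT_comp, hts, hst]
  intro n hn
  have h1 : substT s (t n) = .atom n := fix_atoms hfix n hn
  obtain ⟨m, hm⟩ : ∃ m, t n = .atom m := by
    cases ht : t n with
    | atom m => exact ⟨m, rfl⟩
    | arrow a b => rw [ht] at h1; exact absurd h1 (by simp [substT])
  have hsm : s m = .atom n := by rw [hm] at h1; exact h1
  have hle : countAtom n α ≤ countAtom m β := by
    rw [← hts]; exact count_le_subst hm α
  have hge : countAtom m β ≤ countAtom n α := by
    rw [← hts]
    refine count_ge_subst hm α (fun k hk => ?_)
    have h2 : substT s (t k) = .atom k := fix_atoms hfix k hk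
    obtain ⟨mk, hmk⟩ : ∃ mk, t k = .atom mk := by
      cases ht : t k with
      | atom mk => exact ⟨mk, rfl⟩
      | arrow a b => rw [ht] at h2; exact absurd h2 (by simp [substT])
    by_cases hmm : mk = m
    · left
      subst hmm
      rw [hmk] at h2
      simp [substT, hsm] at h2
      exact h2.symm
    · right; simp [hmk, countAtom, hmm]
  have := hb m (by omega)
  omega

def sizeTy : Ty → ℕ
  | .atom _ => 1
  | .arrow a b => sizeTy a + sizeTy b + 1

theorem sizeTy_pos (τ : Ty) : 0 < sizeTy τ := by
  cases τ <;> simp [sizeTy] <;> omega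

theorem size_le_subst {a : ℕ} {τ : Ty} (h : countAtom a τ ≠ 0) (s : ℕ → Ty) :
    sizeTy (s a) ≤ sizeTy (substT s τ) := by
  induction τ with
  | atom k =>
    have : k = a := by by_contra hk; simp [countAtom, hk] at h
    subst this; simp [substT]
  | arrow x y ihx ihy =>
    have h' : countAtom a x ≠ 0 ∨ countAtom a y ≠ 0 := by
      simp only [countAtom] at h; omega
    rcases h' with h' | h'
    · have := ihx h'; simp [substT, sizeTy]; omega
    · have := ihy h'; simp [substT, sizeTy]; omega

theorem occurs_no_unif {a : ℕ} {x y : Ty} (h : countAtom a (Ty.arrow x y) ≠ 0) (s : ℕ → Ty) :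
    s a ≠ substT s (.arrow x y) := by
  intro he
  have h' : countAtom a x ≠ 0 ∨ countAtom a y ≠ 0 := by
    simp only [countAtom] at h; omega
  have hlt : sizeTy (s a) < sizeTy (substT s (Ty.arrow x y)) := by
    rcases h' with h' | h'
    · have := size_le_subst h' s
      have hy := sizeTy_pos (substT s y)
      simp only [substT, sizeTy]; omega
    · have := size_le_subst h' s
      have hx := sizeTy_pos (substT s x)
      simp only [substT, sizeTy]; omega
  rw [he] at hlt; omega

/-- single substitution -/
def single (a : ℕ) (ρ : Ty) : ℕ → Ty := fun n => if n = a then ρ else .atom n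

theorem count_single {a : ℕ} {ρ : Ty} (ha : countAtom a ρ = 0) (m : ℕ) (x : Ty) :
    countAtom m (substT (single a ρ) x) =
      (if m = a then 0 else countAtom m x) + countAtom a x * countAtom m ρ := by
  induction x with
  | atom k =>
    by_cases hk : k = a
    · subst hk
      by_cases hmk : m = k
      · subst hmk
        simp [substT, single, countAtom, ha]
      · simp [substT, single, countAtom, hmk, Ne.symm hmk]
    · by_cases hma : m = a
      · subst hma
        simp [substT, single, countAtom, hk, ha]
      · by_cases hkm : k = m
        · subst hkm
          simp [substT, single, countAtom, hk, hma]
        · simp [substT, single, countAtom, hk, hkm]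
  | arrow x y ihx ihy =>
    simp only [substT, countAtom, ihx, ihy]
    by_cases hma : m = a <;> simp [hma] <;> ring

theorem substT_single_self {a : ℕ} {ρ : Ty} {x : Ty} (hx : countAtom a x = 0) :
    substT (single a ρ) x = x := by
  rw [substT_congr' (t := fun n => Ty.atom n), substT_id]
  intro n hn
  have : n ≠ a := by rintro rfl; exact hn hx
  simp [single, this]

theorem unif_single {σ : ℕ → Ty} {a : ℕ} {ρ : Ty} (hσ : σ a = substT σ ρ) (x : Ty) :
    substT σ (substT (single a ρ) x) = substT σ x := by
  rw [substT_comp]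
  congr 1
  funext n
  by_cases hn : n = a
  · subst hn; simp [single, hσ]
  · simp [single, hn, substT]

theorem count_rename_mem {e : ℕ → ℕ} (he : Function.Injective e) (k : ℕ) (τ : Ty) :
    countAtom (e k) (substT (fun n => .atom (e n)) τ) = countAtom k τ := by
  induction τ with
  | atom n =>
    by_cases h : n = k
    · subst h; simp [substT, countAtom]
    · have hne : e n ≠ e k := fun h' => h (he h')
      simp [substT, countAtom, h, hne]
  | arrow a b iha ihb => simp [substT, countAtom, iha, ihb]

theorem count_rename_not {e : ℕ → ℕ} {m : ℕ} (hm : ∀ k, m ≠ e k) (τ : Ty) :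
    countAtom m (substT (fun n => .atom (e n)) τ) = 0 := by
  induction τ with
  | atom n => simp [substT, countAtom, Ne.symm (hm n)]
  | arrow a b iha ihb => simp [substT, countAtom, iha, ihb]

/-- counting atoms over a list of types -/
def cntS (n : ℕ) (S : List Ty) : ℕ := (S.map (countAtom n)).sum

/-- counting atoms over a list of equations -/
def cntE (n : ℕ) (E : List (Ty × Ty)) : ℕ :=
  (E.map (fun p => countAtom n p.1 + countAtom n p.2)).sum

def sizeE (E : List (Ty × Ty)) : ℕ := (E.map (fun p => sizeTy p.1 + sizeTy p.2)).sum

def atomsT : Ty → Finset ℕ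
  | .atom n => {n}
  | .arrow a b => atomsT a ∪ atomsT b

def atomsE : List (Ty × Ty) → Finset ℕ
  | [] => ∅
  | p :: E => atomsT p.1 ∪ atomsT p.2 ∪ atomsE E

theorem mem_atomsT {n : ℕ} {τ : Ty} : n ∈ atomsT τ ↔ countAtom n τ ≠ 0 := by
  induction τ with
  | atom m =>
    simp only [atomsT, Finset.mem_singleton, countAtom]
    by_cases h : m = n
    · subst h; simp
    · simp [h, Ne.symm h]
  | arrow a b iha ihb => simp [atomsT, countAtom, iha, ihb]; omega

theorem mem_atomsE {n : ℕ} {E : List (Ty × Ty)} : n ∈ atomsE E ↔ cntE n E ≠ 0 := by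
  induction E with
  | nil => simp [atomsE, cntE]
  | cons p E ih => simp [atomsE, cntE, mem_atomsT, ih]; omega

theorem cntS_cons (n : ℕ) (τ : Ty) (S : List Ty) :
    cntS n (τ :: S) = countAtom n τ + cntS n S := by simp [cntS]

theorem cntS_append (n : ℕ) (S T : List Ty) :
    cntS n (S ++ T) = cntS n S + cntS n T := by simp [cntS]

theorem cntE_cons (n : ℕ) (p : Ty × Ty) (E : List (Ty × Ty)) :
    cntE n (p :: E) = countAtom n p.1 + countAtom n p.2 + cntE n E := by
  simp [cntE]

theorem cntS_map_single {a : ℕ} {ρ : Ty} (ha : countAtom a ρ = 0) (S : List Ty) (n : ℕ) :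
    cntS n (S.map (substT (single a ρ))) =
      (if n = a then 0 else cntS n S) + cntS a S * countAtom n ρ := by
  induction S with
  | nil => simp [cntS]
  | cons x S ih =>
    simp only [List.map_cons, cntS_cons, ih, count_single ha]
    by_cases hna : n = a <;> simp [hna] <;> ring

theorem cntE_map_single {a : ℕ} {ρ : Ty} (ha : countAtom a ρ = 0)
    (E : List (Ty × Ty)) (n : ℕ) :
    cntE n (E.map (fun p => (substT (single a ρ) p.1, substT (single a ρ) p.2))) =
      (if n = a then 0 else cntE n E) + cntE a E * countAtom n ρ := by
  induction E with
  | nil => simp [cntE]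
  | cons p E ih =>
    simp only [List.map_cons, cntE_cons, ih, count_single ha]
    by_cases hna : n = a <;> simp [hna] <;> ring

theorem cntS_rename_mem {e : ℕ → ℕ} (he : Function.Injective e) (k : ℕ) (S : List Ty) :
    cntS (e k) (S.map (substT (fun n => .atom (e n)))) = cntS k S := by
  induction S with
  | nil => simp [cntS]
  | cons x S ih => simp [List.map_cons, cntS_cons, ih, count_rename_mem he]

theorem cntS_rename_not {e : ℕ → ℕ} {m : ℕ} (hm : ∀ k, m ≠ e k) (S : List Ty) :
    cntS m (S.map (substT (fun n => .atom (e n)))) = 0 := by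
  induction S with
  | nil => simp [cntS]
  | cons x S ih => simp [List.map_cons, cntS_cons, ih, count_rename_not hm]

theorem lookup_map_subst (s : ℕ → Ty) (Γ : List (ℕ × Ty)) (x : ℕ) :
    lookupCtx (Γ.map (fun p => (p.1, substT s p.2))) x = (lookupCtx Γ x).map (substT s) := by
  induction Γ with
  | nil => rfl
  | cons p Γ ih =>
    obtain ⟨y, τ⟩ := p
    by_cases h : x = y <;> simp [lookupCtx, h, ih]

theorem STyping.substT_ctx {Γ : List (ℕ × Ty)} {M : Tm} {τ : Ty} (h : STyping Γ M τ)
    (s : ℕ → Ty) :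
    STyping (Γ.map (fun p => (p.1, substT s p.2))) M (substT s τ) := by
  induction h with
  | var h => exact .var (by rw [lookup_map_subst, h]; rfl)
  | app h1 h2 ih1 ih2 => exact .app (by simpa [substT] using ih1) ih2
  | lam h ih => exact .lam (by simpa using ih)

theorem STyping.mono {Γ Δ : List (ℕ × Ty)} {M : Tm} {τ : Ty} (h : STyping Γ M τ)
    (hl : ∀ x, Tm.countFree x M ≠ 0 → lookupCtx Δ x = lookupCtx Γ x) :
    STyping Δ M τ := by
  induction h generalizing Δ with
  | @var Γ x α h =>
    exact .var (by rw [hl x (by simp [Tm.countFree]), h])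
  | @app Γ P Q α β h1 h2 ih1 ih2 =>
    refine .app (ih1 fun x hx => hl x ?_) (ih2 fun x hx => hl x ?_) <;>
      simp only [Tm.countFree] <;> omega
  | @lam Γ y α N β h ih =>
    refine .lam (ih fun x hx => ?_)
    by_cases hxy : x = y
    · subst hxy; simp [lookupCtx]
    · have : Tm.countFree x (Tm.lam y N) ≠ 0 := by
        simpa [Tm.countFree, Ne.symm hxy] using hx
      simp [lookupCtx, hxy, hl x this]

theorem lookup_append_left {Γ Δ : List (ℕ × Ty)} {x : ℕ} (h : x ∈ Γ.map Prod.fst) :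
    lookupCtx (Γ ++ Δ) x = lookupCtx Γ x := by
  induction Γ with
  | nil => simp at h
  | cons p Γ ih =>
    obtain ⟨y, τ⟩ := p
    by_cases hxy : x = y
    · simp [lookupCtx, hxy]
    · simp only [List.map_cons, List.mem_cons] at h
      rcases h with h | h
    
      · exact absurd h hxy
      · simp [lookupCtx, hxy, ih h]

theorem lookup_append_right {Γ Δ : List (ℕ × Ty)} {x : ℕ} (h : x ∉ Γ.map Prod.fst) :
    lookupCtx (Γ ++ Δ) x = lookupCtx Δ x := by
  induction Γ with
  | nil => rfl
  | cons p Γ ih =>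
    obtain ⟨y, τ⟩ := p
    simp only [List.map_cons, List.mem_cons] at h
    push_neg at h
    simp [lookupCtx, h.1, ih h.2]

theorem lookup_middle {Γ₁ Γ₂ : List (ℕ × Ty)} {y : ℕ} {α : Ty}
    (h : y ∉ Γ₁.map Prod.fst) (x : ℕ) :
    lookupCtx (Γ₁ ++ (y, α) :: Γ₂) x = lookupCtx ((y, α) :: (Γ₁ ++ Γ₂)) x := by
  by_cases hxy : x = y
  · subst hxy
    rw [lookup_append_right h]
    simp [lookupCtx]
  · simp only [lookupCtx, if_neg hxy]
    by_cases hx : x ∈ Γ₁.map Prod.fst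
    · rw [lookup_append_left hx, lookup_append_left hx]
    · rw [lookup_append_right hx, lookup_append_right hx]
      simp [lookupCtx, hxy]

def Unifies (u : ℕ → Ty) (E : List (Ty × Ty)) : Prop :=
  ∀ p ∈ E, substT u p.1 = substT u p.2

def UC (E : List (Ty × Ty)) (S : List Ty) : Prop :=
  ∃ u, Unifies u E ∧ (∀ σ, Unifies σ E → ∃ r, ∀ n, substT r (u n) = σ n) ∧
    (∀ n, cntS n (S.map (substT u)) = 0 ∨ cntS n (S.map (substT u)) = 2)

theorem elim_step {A : ℕ} {a : ℕ} {ρ : Ty} (hne : ρ ≠ .atom a)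
    (E' : List (Ty × Ty)) (S : List Ty)
    (IH : ∀ (E₂ : List (Ty × Ty)) (S₂ : List Ty), (atomsE E₂).card < A →
        (∃ σ, Unifies σ E₂) →
        (∀ n, cntE n E₂ + cntS n S₂ = 0 ∨ cntE n E₂ + cntS n S₂ = 2) → UC E₂ S₂)
    (hcard : (insert a (atomsT ρ ∪ atomsE E')).card ≤ A)
    (σ₀ : ℕ → Ty) (hσ₀ : σ₀ a = substT σ₀ ρ) (hσE : Unifies σ₀ E')
    (hbal : ∀ n, ((if a = n then 1 else 0) + countAtom n ρ) + (cntE n E' + cntS n S) = 0 ∨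
                 ((if a = n then 1 else 0) + countAtom n ρ) + (cntE n E' + cntS n S) = 2) :
    ∃ u, substT u (.atom a) = substT u ρ ∧ Unifies u E' ∧
      (∀ σ, σ a = substT σ ρ → Unifies σ E' → ∃ r, ∀ n, substT r (u n) = σ n) ∧
      (∀ n, cntS n (S.map (substT u)) = 0 ∨ cntS n (S.map (substT u)) = 2) := by
  have ha : countAtom a ρ = 0 := by
    cases ρ with
    | atom b =>
      have hb : b ≠ a := fun h => hne (by rw [h])
      simp [countAtom, hb]
    | arrow x y =>
      by_contra h
      exact occurs_no_unif h σ₀ hσ₀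
  set θ := single a ρ with hθ
  set E₂ := E'.map (fun p => (substT θ p.1, substT θ p.2)) with hE₂
  set S₂ := S.map (substT θ) with hS₂
  have hba : cntE a E' + cntS a S = 1 := by
    have := hbal a
    simp [ha] at this
    omega
  have hbal₂ : ∀ n, cntE n E₂ + cntS n S₂ = 0 ∨ cntE n E₂ + cntS n S₂ = 2 := by
    intro n
    rw [hE₂, hS₂, cntE_map_single ha, cntS_map_single ha]
    by_cases hna : n = a
    · subst hna; simp [ha]
    · simp only [if_neg hna]
      have hmul : cntE a E' * countAtom n ρ + cntS a S * countAtom n ρ = countAtom n ρ := by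
        rw [← Nat.add_mul, hba, Nat.one_mul]
      have h2 := hbal n
      have han : ¬ (a = n) := fun h => hna h.symm
      simp only [if_neg han] at h2
      omega
  have hσE₂ : ∀ σ, σ a = substT σ ρ → Unifies σ E' → Unifies σ E₂ := by
    intro σ hσa hσ p hp
    rw [hE₂] at hp
    obtain ⟨q, hq, rfl⟩ := List.mem_map.1 hp
    simp only
    rw [unif_single hσa, unif_single hσa]
    exact hσ q hq
  have hcard₂ : (atomsE E₂).card < A := by
    have hsub : atomsE E₂ ⊆ (insert a (atomsT ρ ∪ atomsE E')).erase a := by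
      intro n hn
      rw [mem_atomsE] at hn
      have hna : n ≠ a := by
        intro h; subst h
        rw [hE₂, cntE_map_single ha] at hn
        simp [ha] at hn
      rw [hE₂, cntE_map_single ha, if_neg hna] at hn
      rw [Finset.mem_erase]
      refine ⟨hna, ?_⟩
      rw [Finset.mem_insert, Finset.mem_union, mem_atomsT, mem_atomsE]
      by_cases h1 : cntE n E' = 0
      · have h2 : countAtom n ρ ≠ 0 := by
          intro h2; rw [h1, h2, Nat.mul_zero] at hn; simp at hn
        exact Or.inr (Or.inl h2)
      · exact Or.inr (Or.inr h1)
    have h1 : ((insert a (atomsT ρ ∪ atomsE E')).erase a).card <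
        (insert a (atomsT ρ ∪ atomsE E')).card :=
      Finset.card_erase_lt_of_mem (Finset.mem_insert_self _ _)
    have h2 := Finset.card_le_card hsub
    omega
  obtain ⟨u', hu'E, hu'fac, hu'bal⟩ := IH E₂ S₂ hcard₂ ⟨σ₀, hσE₂ σ₀ hσ₀ hσE⟩ hbal₂
  set u : ℕ → Ty := fun n => substT u' (θ n) with hu
  have hcomp : ∀ x, substT u x = substT u' (substT θ x) := fun x => (substT_comp u' θ x).symm
  have hθρ : substT θ ρ = ρ := substT_single_self ha
  have hθa : θ a = ρ := by simp [hθ, single]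
  refine ⟨u, ?_, ?_, ?_, ?_⟩
  · show substT u (.atom a) = substT u ρ
    rw [hcomp, hcomp]
    show substT u' (θ a) = substT u' (substT θ ρ)
    rw [hθa, hθρ]
  · intro p hp
    rw [hcomp, hcomp]
    exact hu'E (substT θ p.1, substT θ p.2) (by rw [hE₂]; exact List.mem_map_of_mem hp)
  · intro σ hσa hσ
    obtain ⟨r, hr⟩ := hu'fac σ (hσE₂ σ hσa hσ)
    refine ⟨r, fun n => ?_⟩
    have h1 : substT r (u n) = substT σ (θ n) := by
      rw [hu]
      simp only
      rw [substT_comp]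
      have hfun : (fun k => substT r (u' k)) = σ := funext hr
      rw [hfun]
    rw [h1]
    by_cases hn : n = a
    · subst hn; rw [hθa, ← hσa]
    · simp [hθ, single, hn, substT]
  · intro n
    have hmap : S.map (substT u) = S₂.map (substT u') := by
      rw [hS₂, List.map_map]
      exact List.map_congr_left (fun x _ => hcomp x)
    rw [hmap]
    exact hu'bal n

theorem unify_aux (A : ℕ) : ∀ (E : List (Ty × Ty)) (S : List Ty),
    (atomsE E).card ≤ A → (∃ σ, Unifies σ E) →
    (∀ n, cntE n E + cntS n S = 0 ∨ cntE n E + cntS n S = 2) → UC E S := by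
  induction A using Nat.strong_induction_on with
  | _ A ihA =>
  have key : ∀ (sz : ℕ) (E : List (Ty × Ty)) (S : List Ty), sizeE E ≤ sz →
      (atomsE E).card ≤ A → (∃ σ, Unifies σ E) →
      (∀ n, cntE n E + cntS n S = 0 ∨ cntE n E + cntS n S = 2) → UC E S := by
    intro sz
    induction sz using Nat.strong_induction_on with
    | _ sz ihsz =>
    intro E S hsz hcard hex hbal
    match E with
    | [] =>
      refine ⟨fun n => .atom n, fun p hp => absurd hp List.not_mem_nil,
        fun σ _ => ⟨σ, fun n => rfl⟩, fun n => ?_⟩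
      have hid : S.map (substT (fun n => Ty.atom n)) = S := by
        rw [show Ty.substT (fun n => Ty.atom n) = id from funext substT_id, List.map_id]
      rw [hid]
      have := hbal n
      simp only [cntE, List.map_nil, List.sum_nil, Nat.zero_add] at this
      exact this
    | (τ, ρ) :: E' =>
      obtain ⟨σ₀, hσ₀⟩ := hex
      have hσhead : substT σ₀ τ = substT σ₀ ρ := hσ₀ (τ, ρ) (List.mem_cons_self)
      have hσtail : Unifies σ₀ E' := fun p hp => hσ₀ p (List.mem_cons_of_mem _ hp)
      match τ, ρ with
      | .atom a, ρ =>
        by_cases hρ : ρ = .atom a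
        · subst hρ
          have hszE : sizeE E' < sz := by
            simp only [sizeE, List.map_cons, List.sum_cons, sizeTy] at hsz ⊢
            omega
          have hcard' : (atomsE E').card ≤ A := by
            refine le_trans (Finset.card_le_card ?_) hcard
            exact Finset.subset_union_right
          have hbal' : ∀ n, cntE n E' + cntS n S = 0 ∨ cntE n E' + cntS n S = 2 := by
            intro n
            have := hbal n
            rw [cntE_cons] at this
            by_cases han : a = n <;> simp [countAtom, han] at this <;> omega
          obtain ⟨u, huE, hufac, hubal⟩ :=
            ihsz (sizeE E') hszE E' S le_rfl hcard' ⟨σ₀, hσtail⟩ hbal'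
          refine ⟨u, ?_, ?_, hubal⟩
          · intro p hp
            rcases List.mem_cons.1 hp with rfl | hp
            · rfl
            · exact huE p hp
          · intro σ hσ
            exact hufac σ (fun p hp => hσ p (List.mem_cons_of_mem _ hp))
        · have hAeq : atomsE ((Ty.atom a, ρ) :: E') = insert a (atomsT ρ ∪ atomsE E') := by
            ext n; simp [atomsE, atomsT]; try tauto
          have hcard' : (insert a (atomsT ρ ∪ atomsE E')).card ≤ A := by
            rw [← hAeq]; exact hcard
          have hbal' : ∀ n, ((if a = n then 1 else 0) + countAtom n ρ) + (cntE n E' + cntS n S) = 0 ∨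
              ((if a = n then 1 else 0) + countAtom n ρ) + (cntE n E' + cntS n S) = 2 := by
            intro n
            have := hbal n
            rw [cntE_cons] at this
            simp only [countAtom] at this
            omega
          obtain ⟨u, hueq, huE, hufac, hubal⟩ :=
            elim_step hρ E' S
              (fun E₂ S₂ hc => ihA (atomsE E₂).card hc E₂ S₂ le_rfl)
              hcard' σ₀ hσhead hσtail hbal'
          refine ⟨u, ?_, ?_, hubal⟩
          · intro p hp
            rcases List.mem_cons.1 hp with rfl | hp
            · exact hueq
            · exact huE p hp
          · intro σ hσ
            exact hufac σ (hσ (Ty.atom a, ρ) (List.mem_cons_self))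
              (fun p hp => hσ p (List.mem_cons_of_mem _ hp))
      | .arrow x y, .atom a =>
        have hne : Ty.arrow x y ≠ Ty.atom a := by simp
        have hAeq : atomsE ((Ty.arrow x y, Ty.atom a) :: E') =
            insert a (atomsT (Ty.arrow x y) ∪ atomsE E') := by
          ext n; simp [atomsE, atomsT]; try tauto
        have hcard' : (insert a (atomsT (Ty.arrow x y) ∪ atomsE E')).card ≤ A := by
          rw [← hAeq]; exact hcard
        have hbal' : ∀ n, ((if a = n then 1 else 0) + countAtom n (Ty.arrow x y)) +
              (cntE n E' + cntS n S) = 0 ∨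
            ((if a = n then 1 else 0) + countAtom n (Ty.arrow x y)) +
              (cntE n E' + cntS n S) = 2 := by
          intro n
          have := hbal n
          rw [cntE_cons] at this
          simp only [countAtom] at this ⊢
          omega
        obtain ⟨u, hueq, huE, hufac, hubal⟩ :=
          elim_step hne E' S
            (fun E₂ S₂ hc => ihA (atomsE E₂).card hc E₂ S₂ le_rfl)
            hcard' σ₀ hσhead.symm hσtail hbal'
        refine ⟨u, ?_, ?_, hubal⟩
        · intro p hp
          rcases List.mem_cons.1 hp with rfl | hp
          · exact hueq.symm
          · exact huE p hp
        · intro σ hσ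
          exact hufac σ (hσ (Ty.arrow x y, Ty.atom a) (List.mem_cons_self)).symm
            (fun p hp => hσ p (List.mem_cons_of_mem _ hp))
      | .arrow x y, .arrow z w =>
        set E₂ := (x, z) :: (y, w) :: E' with hE₂
        have hcnt : ∀ n, cntE n E₂ = cntE n ((Ty.arrow x y, Ty.arrow z w) :: E') := by
          intro n
          simp only [hE₂, cntE_cons, countAtom]
          ring
        have hszE : sizeE E₂ < sz := by
          simp only [hE₂, sizeE, List.map_cons, List.sum_cons, sizeTy] at hsz ⊢
          omega
        have hcard' : (atomsE E₂).card ≤ A := by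
          refine le_trans (Finset.card_le_card ?_) hcard
          intro n hn
          rw [mem_atomsE] at hn ⊢
          rw [← hcnt]
          exact hn
        have hbal' : ∀ n, cntE n E₂ + cntS n S = 0 ∨ cntE n E₂ + cntS n S = 2 := by
          intro n
          rw [hcnt]
          exact hbal n
        have hσheads : substT σ₀ x = substT σ₀ z ∧ substT σ₀ y = substT σ₀ w := by
          simp only [substT, Ty.arrow.injEq] at hσhead
          exact hσhead
        have hσE₂ : ∀ σ, Unifies σ ((Ty.arrow x y, Ty.arrow z w) :: E') → Unifies σ E₂ := by
          intro σ hσ p hp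
          have hh : substT σ (Ty.arrow x y) = substT σ (Ty.arrow z w) :=
            hσ (Ty.arrow x y, Ty.arrow z w) (List.mem_cons_self)
          simp only [substT, Ty.arrow.injEq] at hh
          rcases List.mem_cons.1 hp with rfl | hp
          · exact hh.1
          rcases List.mem_cons.1 hp with rfl | hp
          · exact hh.2
          · exact hσ p (List.mem_cons_of_mem _ hp)
        obtain ⟨u, huE, hufac, hubal⟩ :=
          ihsz (sizeE E₂) hszE E₂ S le_rfl hcard' ⟨σ₀, hσE₂ σ₀ hσ₀⟩ hbal'
        refine ⟨u, ?_, ?_, hubal⟩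
        · intro p hp
          rcases List.mem_cons.1 hp with rfl | hp
          · have h1 := huE (x, z) (List.mem_cons_self)
            have h2 := huE (y, w) (List.mem_cons_of_mem _ (List.mem_cons_self))
            simp only [substT, Ty.arrow.injEq]
            exact ⟨h1, h2⟩
          · exact huE p (List.mem_cons_of_mem _ (List.mem_cons_of_mem _ hp))
        · intro σ hσ
          exact hufac σ (hσE₂ σ hσ)
  intro E S h1 h2 h3
  exact key (sizeE E) E S le_rfl h1 h2 h3

theorem build (M : Tm) : ∀ (_ : Tm.LinearBody M) (_ : ∀ x, Tm.countFree x M ≤ 1)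
    (Γ' : List (ℕ × Ty)) (τ' : Ty) (_ : STyping Γ' M τ'),
    ∃ (Γ : List (ℕ × Ty)) (τ : Ty),
      STyping Γ M τ ∧
      (∀ x, x ∈ Γ.map Prod.fst ↔ Tm.countFree x M ≠ 0) ∧
      (Γ.map Prod.fst).Nodup ∧
      (∀ n, cntS n (τ :: Γ.map Prod.snd) = 0 ∨ cntS n (τ :: Γ.map Prod.snd) = 2) ∧
      ∃ s, substT s τ = τ' ∧ ∀ p ∈ Γ, lookupCtx Γ' p.1 = some (substT s p.2) := by
  induction M with
  | var x =>
    intro hlb hcf Γ' τ' h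
    cases h with
    | var hl =>
      refine ⟨[(x, .atom 0)], .atom 0, .var (by simp [lookupCtx]), ?_, by simp, ?_,
        fun _ => τ', rfl, ?_⟩
      · intro z
        by_cases hzx : x = z
        · subst hzx; simp [Tm.countFree]
        · simp [Tm.countFree, hzx, Ne.symm hzx]
      · intro n
        by_cases h0 : (0 : ℕ) = n
        · cases h0; simp [cntS, countAtom]
        · simp [cntS, countAtom, h0]
      · intro p hp
        simp only [List.mem_singleton] at hp
        subst hp
        exact hl
  | app P Q ihP ihQ =>
    intro hlb hcf Γ' τ' h
    obtain ⟨hlbP, hlbQ⟩ := hlb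
    have hcfP : ∀ x, Tm.countFree x P ≤ 1 := fun x => by
      have := hcf x; simp only [Tm.countFree] at this; omega
    have hcfQ : ∀ x, Tm.countFree x Q ≤ 1 := fun x => by
      have := hcf x; simp only [Tm.countFree] at this; omega
    cases h with
    | app hP hQ =>
    rename_i σ'
    obtain ⟨Γ_P, τ_P, htyP, hkeysP, hndP, hbalP, sP, hsPτ, hsPctx⟩ := ihP hlbP hcfP _ _ hP
    obtain ⟨Γ_Q, τ_Q, htyQ, hkeysQ, hndQ, hbalQ, sQ, hsQτ, hsQctx⟩ := ihQ hlbQ hcfQ _ _ hQ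
    -- rename atoms of the two principal pairs apart
    set rP : ℕ → Ty := fun n => Ty.atom (3 * n) with hrP
    set rQ : ℕ → Ty := fun n => Ty.atom (3 * n + 1) with hrQ
    set f : ℕ × Ty → ℕ × Ty := fun p => (p.1, substT rP p.2) with hf
    set g : ℕ × Ty → ℕ × Ty := fun p => (p.1, substT rQ p.2) with hg
    set ΓP := Γ_P.map f with hΓP
    set ΓQ := Γ_Q.map g with hΓQ
    set τP := substT rP τ_P with hτP
    set τQ := substT rQ τ_Q with hτQ
    have htyP' : STyping ΓP P τP := htyP.substT_ctx rP
    have htyQ' : STyping ΓQ Q τQ := htyQ.substT_ctx rQ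
    have hkP : ΓP.map Prod.fst = Γ_P.map Prod.fst := by
      rw [hΓP, List.map_map]; rfl
    have hkQ : ΓQ.map Prod.fst = Γ_Q.map Prod.fst := by
      rw [hΓQ, List.map_map]; rfl
    have hsP : ΓP.map Prod.snd = (Γ_P.map Prod.snd).map (substT rP) := by
      rw [hΓP, List.map_map, List.map_map]; rfl
    have hsQ : ΓQ.map Prod.snd = (Γ_Q.map Prod.snd).map (substT rQ) := by
      rw [hΓQ, List.map_map, List.map_map]; rfl
    -- the equation and the sequent
    set E : List (Ty × Ty) := [(τP, .arrow τQ (.atom 2))] with hE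
    set S : List Ty := .atom 2 :: (ΓP.map Prod.snd ++ ΓQ.map Prod.snd) with hS
    set σ₀ : ℕ → Ty :=
      fun n => if n = 2 then τ' else if n % 3 = 0 then sP (n / 3) else sQ (n / 3) with hσ₀
    have hσPc : ∀ τ₀, substT σ₀ (substT rP τ₀) = substT sP τ₀ := by
      intro τ₀
      rw [substT_comp]
      congr 1
      funext n
      have h1 : 3 * n ≠ 2 := by omega
      have h2 : (3 * n) % 3 = 0 := by omega
      have h3 : (3 * n) / 3 = n := by omega
      simp [hrP, substT, hσ₀, h1, h2, h3]
    have hσQc : ∀ τ₀, substT σ₀ (substT rQ τ₀) = substT sQ τ₀ := by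
      intro τ₀
      rw [substT_comp]
      congr 1
      funext n
      have h1 : 3 * n + 1 ≠ 2 := by omega
      have h2 : ¬ ((3 * n + 1) % 3 = 0) := by omega
      have h3 : (3 * n + 1) / 3 = n := by omega
      simp [hrQ, substT, hσ₀, h1, h2, h3]
    have hσunif : Unifies σ₀ E := by
      intro p hp
      rw [hE] at hp
      simp only [List.mem_singleton] at hp
      subst hp
      show substT σ₀ τP = substT σ₀ (.arrow τQ (.atom 2))
      rw [hτP, hτQ, hσPc, hsPτ]
      show _ = Ty.arrow (substT σ₀ (substT rQ τ_Q)) (substT σ₀ (.atom 2))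
      rw [hσQc, hsQτ]
      show _ = Ty.arrow σ' (σ₀ 2)
      simp [hσ₀]
    have hbalpre : ∀ n, cntE n E + cntS n S = 0 ∨ cntE n E + cntS n S = 2 := by
      intro n
      have hEeq : cntE n E = countAtom n τP + countAtom n τQ + (if 2 = n then 1 else 0) := by
        simp [hE, cntE, countAtom]
        omega
      have hSeq : cntS n S = (if 2 = n then 1 else 0) +
          (cntS n (ΓP.map Prod.snd) + cntS n (ΓQ.map Prod.snd)) := by
        simp [hS, cntS_cons, cntS_append, countAtom]
      rw [hEeq, hSeq, hsP, hsQ]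
      have hmod : n % 3 = 0 ∨ n % 3 = 1 ∨ n % 3 = 2 := by omega
      rcases hmod with h3 | h3 | h3
      · -- n = 3k
        obtain ⟨k, rfl⟩ : ∃ k, n = 3 * k := ⟨n / 3, by omega⟩
        have e1 : countAtom (3 * k) τP = countAtom k τ_P := by
          rw [hτP, hrP]; exact count_rename_mem (e := fun n => 3*n) (by intro a b h; dsimp only at h; omega) k τ_P
        have e2 : countAtom (3 * k) τQ = 0 := by
          rw [hτQ, hrQ]; exact count_rename_not (e := fun n => 3*n+1) (by intro j; omega) τ_Q
        have e3 : cntS (3 * k) ((Γ_P.map Prod.snd).map (substT rP)) =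
            cntS k (Γ_P.map Prod.snd) := by
          rw [hrP]; exact cntS_rename_mem (e := fun n => 3*n) (by intro a b h; dsimp only at h; omega) k _
        have e4 : cntS (3 * k) ((Γ_Q.map Prod.snd).map (substT rQ)) = 0 := by
          rw [hrQ]; exact cntS_rename_not (e := fun n => 3*n+1) (by intro j; omega) _
        have e5 : ¬ ((2 : ℕ) = 3 * k) := by omega
        rw [e1, e2, e3, e4, if_neg e5]
        have := hbalP k
        rw [cntS_cons] at this
        omega
      · -- n = 3k+1
        obtain ⟨k, rfl⟩ : ∃ k, n = 3 * k + 1 := ⟨n / 3, by omega⟩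
        have e1 : countAtom (3 * k + 1) τP = 0 := by
          rw [hτP, hrP]; exact count_rename_not (e := fun n => 3*n) (by intro j; omega) τ_P
        have e2 : countAtom (3 * k + 1) τQ = countAtom k τ_Q := by
          rw [hτQ, hrQ]; exact count_rename_mem (e := fun n => 3*n+1) (by intro a b h; dsimp only at h; omega) k τ_Q
        have e3 : cntS (3 * k + 1) ((Γ_P.map Prod.snd).map (substT rP)) = 0 := by
          rw [hrP]; exact cntS_rename_not (e := fun n => 3*n) (by intro j; omega) _
        have e4 : cntS (3 * k + 1) ((Γ_Q.map Prod.snd).map (substT rQ)) =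
            cntS k (Γ_Q.map Prod.snd) := by
          rw [hrQ]; exact cntS_rename_mem (e := fun n => 3*n+1) (by intro a b h; dsimp only at h; omega) k _
        have e5 : ¬ ((2 : ℕ) = 3 * k + 1) := by omega
        rw [e1, e2, e3, e4, if_neg e5]
        have := hbalQ k
        rw [cntS_cons] at this
        omega
      · -- n % 3 = 2
        have e1 : countAtom n τP = 0 := by
          rw [hτP, hrP]; exact count_rename_not (e := fun n => 3*n) (by intro j; omega) τ_P
        have e2 : countAtom n τQ = 0 := by
          rw [hτQ, hrQ]; exact count_rename_not (e := fun n => 3*n+1) (by intro j; omega) τ_Q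
        have e3 : cntS n ((Γ_P.map Prod.snd).map (substT rP)) = 0 := by
          rw [hrP]; exact cntS_rename_not (e := fun n => 3*n) (by intro j; omega) _
        have e4 : cntS n ((Γ_Q.map Prod.snd).map (substT rQ)) = 0 := by
          rw [hrQ]; exact cntS_rename_not (e := fun n => 3*n+1) (by intro j; omega) _
        rw [e1, e2, e3, e4]
        by_cases h2 : (2 : ℕ) = n <;> simp [h2]
    obtain ⟨u, huE, hufac, hubal⟩ := unify_aux (atomsE E).card E S le_rfl ⟨σ₀, hσunif⟩ hbalpre
    set fu : ℕ × Ty → ℕ × Ty := fun p => (p.1, substT u p.2) with hfu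
    set Γ : List (ℕ × Ty) := ΓP.map fu ++ ΓQ.map fu with hΓ
    set τ : Ty := substT u (.atom 2) with hτ
    -- disjointness of free variables
    have hdisj : ∀ x, x ∈ Γ_P.map Prod.fst → x ∉ Γ_Q.map Prod.fst := by
      intro x h1 h2
      have c1 := (hkeysP x).1 h1
      have c2 := (hkeysQ x).1 h2
      have := hcf x
      simp only [Tm.countFree] at this
      omega
    have hkPu : (ΓP.map fu).map Prod.fst = Γ_P.map Prod.fst := by
      rw [List.map_map]
      exact hkP
    have hkQu : (ΓQ.map fu).map Prod.fst = Γ_Q.map Prod.fst := by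
      rw [List.map_map]
      exact hkQ
    -- typing
    have huhead : substT u τP = .arrow (substT u τQ) (substT u (.atom 2)) :=
      huE (τP, .arrow τQ (.atom 2)) (by rw [hE]; exact List.mem_cons_self)
    have htyΓP : STyping (ΓP.map fu) P (substT u τP) := htyP'.substT_ctx u
    have htyΓQ : STyping (ΓQ.map fu) Q (substT u τQ) := htyQ'.substT_ctx u
    have htyPΓ : STyping Γ P (substT u τP) := by
      refine htyΓP.mono (fun x hx => ?_)
      have hxk : x ∈ (ΓP.map fu).map Prod.fst := by
        rw [hkPu]
        exact (hkeysP x).2 hx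
      rw [hΓ]
      exact lookup_append_left hxk
    have htyQΓ : STyping Γ Q (substT u τQ) := by
      refine htyΓQ.mono (fun x hx => ?_)
      have hxp : x ∉ (ΓP.map fu).map Prod.fst := by
        rw [hkPu]
        intro hmem
        have c1 := (hkeysP x).1 hmem
        have := hcf x
        simp only [Tm.countFree] at this
        omega
      rw [hΓ]
      exact lookup_append_right hxp
    have htyapp : STyping Γ (Tm.app P Q) τ := by
      rw [hτ]
      exact .app (huhead ▸ htyPΓ) htyQΓ
    refine ⟨Γ, τ, htyapp, ?_, ?_, ?_, ?_⟩
    · -- keys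
      intro z
      rw [hΓ, List.map_append, List.mem_append, hkPu, hkQu]
      have h1 := hkeysP z
      have h2 := hkeysQ z
      simp only [Tm.countFree]
      constructor
      · rintro (h | h)
        · have := h1.1 h; omega
        · have := h2.1 h; omega
      · intro h
        by_cases hz : Tm.countFree z P ≠ 0
        · exact Or.inl (h1.2 hz)
        · exact Or.inr (h2.2 (by omega))
    · -- nodup
      rw [hΓ, List.map_append, hkPu, hkQu]
      refine List.Nodup.append hndP hndQ ?_
      intro x h1 h2
      exact hdisj x h1 h2
    · -- balance
      intro n
      have hc : ∀ (X : List (ℕ × Ty)), (X.map fu).map Prod.snd = (X.map Prod.snd).map (substT u) := by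
        intro X; rw [List.map_map, List.map_map]; rfl
      have hseq : τ :: Γ.map Prod.snd = S.map (substT u) := by
        rw [hτ, hΓ, hS, List.map_append, List.map_cons, List.map_append, hc, hc]
      rw [hseq]
      exact hubal n
    · -- principality witness
      obtain ⟨r, hr⟩ := hufac σ₀ hσunif
      have hru : ∀ x, substT r (substT u x) = substT σ₀ x := by
        intro x
        rw [substT_comp]
        have hfun : (fun k => substT r (u k)) = σ₀ := funext hr
        rw [hfun]
      refine ⟨r, ?_, ?_⟩
      · rw [hτ, hru]
        simp [hσ₀, substT]
      · intro p hp
        rw [hΓ, List.mem_append] at hp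
        rcases hp with hp | hp
        · obtain ⟨q, hq, rfl⟩ := List.mem_map.1 hp
          rw [hΓP] at hq
          obtain ⟨q₀, hq₀, rfl⟩ := List.mem_map.1 hq
          show lookupCtx Γ' q₀.1 = some (substT r (substT u (substT rP q₀.2)))
          rw [hru, hσPc]
          exact hsPctx q₀ hq₀
        · obtain ⟨q, hq, rfl⟩ := List.mem_map.1 hp
          rw [hΓQ] at hq
          obtain ⟨q₀, hq₀, rfl⟩ := List.mem_map.1 hq
          show lookupCtx Γ' q₀.1 = some (substT r (substT u (substT rQ q₀.2)))
          rw [hru, hσQc]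
          exact hsQctx q₀ hq₀
  | lam y N ihN =>
    intro hlb hcf Γ' τ' h
    obtain ⟨hlbN, hcnty⟩ := hlb
    cases h with
    | @lam _ _ α' _ β' hN =>
    have hcfN : ∀ x, Tm.countFree x N ≤ 1 := by
      intro x
      by_cases hxy : x = y
      · subst hxy; omega
      · have := hcf x
        simpa [Tm.countFree, show y ≠ x from fun h => hxy h.symm] using this
    obtain ⟨Γ_N, τ_N, htyN, hkeysN, hndN, hbalN, s, hsτ, hsctx⟩ := ihN hlbN hcfN _ _ hN
    have hyin : y ∈ Γ_N.map Prod.fst := (hkeysN y).2 (by rw [hcnty]; omega)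
    obtain ⟨p, hpmem, hpfst⟩ := List.mem_map.1 hyin
    set αy := p.2 with hαyd
    have hpe : p = (y, αy) := by rw [hαyd, ← hpfst]
    rw [hpe] at hpmem
    obtain ⟨Γ₁, Γ₂, hΓN⟩ := List.append_of_mem hpmem
    subst hΓN
    have hnd2 : (y :: (Γ₁.map Prod.fst ++ Γ₂.map Prod.fst)).Nodup := by
      refine List.nodup_middle.1 ?_
      simpa using hndN
    have hynot : y ∉ Γ₁.map Prod.fst ++ Γ₂.map Prod.fst := (List.nodup_cons.1 hnd2).1
    have hndΓ : (Γ₁.map Prod.fst ++ Γ₂.map Prod.fst).Nodup := (List.nodup_cons.1 hnd2).2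
    have hy1 : y ∉ Γ₁.map Prod.fst := fun hm => hynot (List.mem_append_left _ hm)
    have hty : STyping (Γ₁ ++ Γ₂) (Tm.lam y N) (.arrow αy τ_N) := by
      refine .lam (htyN.mono (fun z _ => ?_))
      exact (lookup_middle hy1 z).symm
    refine ⟨Γ₁ ++ Γ₂, .arrow αy τ_N, hty, ?_, by simpa using hndΓ, ?_, s, ?_, ?_⟩
    · -- keys
      intro z
      have hmemN := hkeysN z
      simp only [List.map_append, List.mem_append, List.map_cons, List.mem_cons,
        Prod.fst] at hmemN
      simp only [List.map_append, List.mem_append, Tm.countFree]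
      by_cases hzy : y = z
      · subst hzy
        simp only [List.mem_append] at hynot
        constructor
        · intro hmem; exact absurd hmem hynot
        · intro hmem; simp at hmem
      · rw [if_neg hzy]
        rw [← hmemN]
        have hzy' : ¬ z = y := fun h => hzy h.symm
        tauto
    · -- balance
      intro n
      have := hbalN n
      simp only [cntS_cons, cntS_append, List.map_append, List.map_cons, countAtom] at this ⊢
      omega
    · -- head type matches
      have hαy : substT s αy = α' := by
        have := hsctx (y, αy) hpmem
        simp only [lookupCtx, if_pos rfl] at this
        exact (Option.some.inj this).symm
      show Ty.arrow (substT s αy) (substT s τ_N) = Ty.arrow α' β'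
      rw [hαy, hsτ]
    · -- context
      intro p hp
      have hpN : p ∈ Γ₁ ++ (y, αy) :: Γ₂ := by
        rcases List.mem_append.1 hp with h | h
        · exact List.mem_append_left _ h
        · exact List.mem_append_right _ (List.mem_cons_of_mem _ h)
      have hlk := hsctx p hpN
      have hp1y : ¬ p.1 = y := by
        intro hpy
        apply hynot
        rw [← hpy]
        rcases List.mem_append.1 hp with h | h
        · exact List.mem_append_left _ (List.mem_map_of_mem h)
        · exact List.mem_append_right _ (List.mem_map_of_mem h)
      simpa [lookupCtx, hp1y] using hlk

theorem cf_foldr_notmem (x : ℕ) : ∀ (xs : List ℕ) (M : Tm), x ∉ xs →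
    Tm.countFree x (xs.foldr Tm.lam M) = Tm.countFree x M := by
  intro xs
  induction xs with
  | nil => intro M _; rfl
  | cons y ys ih =>
    intro M hx
    simp only [List.mem_cons] at hx
    push_neg at hx
    have hyx : ¬ y = x := fun h => hx.1 h.symm
    simp only [List.foldr_cons, Tm.countFree, if_neg hyx]
    exact ih M hx.2

theorem cf_foldr_zero (x : ℕ) : ∀ (xs : List ℕ) (M : Tm),
    (x ∈ xs ∨ Tm.countFree x M = 0) → Tm.countFree x (xs.foldr Tm.lam M) = 0 := by
  intro xs
  induction xs with
  | nil =>
    intro M h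
    rcases h with h | h
    · simp at h
    · exact h
  | cons y ys ih =>
    intro M h
    simp only [List.foldr_cons, Tm.countFree]
    by_cases hxy : y = x
    · simp [hxy]
    · rw [if_neg hxy]
      apply ih
      rcases h with h | h
      · rcases List.mem_cons.1 h with h' | h'
        · exact absurd h'.symm hxy
        · exact Or.inl h'
      · exact Or.inr h

theorem lb_foldr : ∀ (xs : List ℕ) (M : Tm), xs.Nodup →
    (∀ y ∈ xs, Tm.countFree y M = 1) → Tm.LinearBody M →
    Tm.LinearBody (xs.foldr Tm.lam M) := by
  intro xs
  induction xs with
  | nil => intro M _ _ h; exact h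
  | cons y ys ih =>
    intro M hnd hcf hlb
    have hnd' := List.nodup_cons.1 hnd
    simp only [List.foldr_cons]
    refine ⟨ih M hnd'.2 (fun z hz => hcf z (List.mem_cons_of_mem _ hz)) hlb, ?_⟩
    rw [cf_foldr_notmem y ys M hnd'.1]
    exact hcf y (List.mem_cons_self)

/-- the principal type of the closure of a linear lambda term
is balanced. -/
theorem principal_type_of_linear_is_balanced
    (M : Tm) (xs : List ℕ) (α : Ty)
    (hlin : Tm.Linear M) (hnodup : xs.Nodup)
    (hfv : ∀ x, Tm.countFree x M ≠ 0 ↔ x ∈ xs)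
    (hpt : PrincipalType (xs.foldr Tm.lam M) α) :
    BalancedTy α := by
  obtain ⟨⟨Γa, hΓa⟩, hprin⟩ := hpt
  have hlbC : Tm.LinearBody (xs.foldr Tm.lam M) := by
    refine lb_foldr xs M hnodup (fun y hy => ?_) hlin.1
    have h1 := (hfv y).2 hy
    have h2 := hlin.2 y
    omega
  have hcfC : ∀ x, Tm.countFree x (xs.foldr Tm.lam M) = 0 := by
    intro x
    by_cases hx : x ∈ xs
    · exact cf_foldr_zero x xs M (Or.inl hx)
    · refine cf_foldr_zero x xs M (Or.inr ?_)
      by_contra h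
      exact hx ((hfv x).1 h)
  obtain ⟨Γc, τc, htyc, hkeysc, _, hbalc, s, hsτ, _⟩ :=
    build (xs.foldr Tm.lam M) hlbC (fun x => by rw [hcfC x]; omega) Γa α hΓa
  have hΓcnil : Γc = [] := by
    cases Γc with
    | nil => rfl
    | cons p Γ =>
      exfalso
      have hmem : p.1 ∈ (p :: Γ).map Prod.fst := by simp
      have := (hkeysc p.1).1 hmem
      exact this (hcfC p.1)
  subst hΓcnil
  have hbalτc : BalancedTy τc := by
    intro n hn
    have := hbalc n
    rw [cntS_cons] at this
    have h0 : cntS n (List.map Prod.snd ([] : List (ℕ × Ty))) = 0 := by simp [cntS]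
    omega
  obtain ⟨t, ht⟩ := hprin [] τc htyc
  exact balanced_transfer hsτ ht hbalτc
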